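/- arXiv:0811.0751 — 5 statements merged into one kernel-verified Lean document; each statement's English description precedes it below -/
import Mathlib

section
/- Let M be a cancellative monoid and let g be an element of M such that gM = Mg (g is quasi-central). Then the set of left-divisors of g equals the set of right-divisors of g. -/
/-- An element `g` of a monoid is quasi-central if `gM = Mg` as sets. -/
def QuasiCentral {M : Type*} [Monoid M] (g : M) : Prop :=
  ∀ x : M, (∃ m, x = g * m) ↔ (∃ m, x = m * g)

/-- In a cancellative monoid, the left-divisors of a quasi-central element
coincide with its right-divisors. -/
theorem stmt_2 (M : Type*) [Monoid M]
    (hcl : ∀ a b c : M, a * b = a * c → b = c)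
    (hcr : ∀ a b c : M, b * a = c * a → b = c)
    (g : M) (hg : QuasiCentral g) :
    ∀ h : M, (∃ k, g = h * k) ↔ (∃ k, g = k * h) := by
  intro h
  constructor
  · rintro ⟨k, hk⟩
    -- h*g ∈ Mg = gM : ∃ a, h*g = g*a
    obtain ⟨a, ha⟩ := (hg (h * g)).2 ⟨h, rfl⟩
    -- from h*g = g*a and g = h*k : h*(h*k) = (h*k)*a, cancel h : g = k*a
    have hka : g = k * a := by
      apply hcl h
      calc h * g = g * a := ha
        _ = h * k * a := by rw [hk]
        _ = h * (k * a) := by rw [mul_assoc]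
    -- g*k ∈ gM = Mg : ∃ t, g*k = t*g
    obtain ⟨t, ht⟩ := (hg (g * k)).1 ⟨k, rfl⟩
    refine ⟨t, hcr g _ _ ?_⟩
    calc g * g = g * (k * a) := by rw [← hka]
      _ = (g * k) * a := by rw [mul_assoc]
      _ = t * g * a := by rw [ht]
      _ = t * (g * a) := by rw [mul_assoc]
      _ = t * (h * g) := by rw [ha]
      _ = t * h * g := by rw [mul_assoc]
  · rintro ⟨k, hk⟩
    -- g*h ∈ gM = Mg : ∃ a, g*h = a*g
    obtain ⟨a, ha⟩ := (hg (g * h)).1 ⟨h, rfl⟩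
    -- from g*h = a*g and g = k*h : (k*h)*h = a*(k*h), cancel right h : g = a*k
    have hak : g = a * k := by
      apply hcr h
      calc g * h = a * g := ha
        _ = a * (k * h) := by rw [hk]
        _ = a * k * h := by rw [mul_assoc]
    -- k*g ∈ Mg = gM : ∃ t, k*g = g*t
    obtain ⟨t, ht⟩ := (hg (k * g)).2 ⟨k, rfl⟩
    refine ⟨t, hcl g _ _ ?_⟩
    calc g * g = (a * k) * g := by rw [← hak]
      _ = a * (k * g) := by rw [mul_assoc]
      _ = a * (g * t) := by rw [ht]
      _ = (a * g) * t := by rw [mul_assoc]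
      _ = (g * h) * t := by rw [ha]
      _ = g * (h * t) := by rw [mul_assoc]
end

section
/- Let M be a cancellative atomic monoid in which any two elements have a least common multiple for left-divisibility, and suppose Δ is a quasi-central element such that every element of M left-divides some power of Δ. Then for every g in M, the set {h^{-1}(h ∨ g) : h in M} (of right complements of g in lcms) has a least common multiple Δ_g for left-divisibility; moreover g left-divides Δ_g and M·Δ_g ⊆ g·M. -/
/-- Left-divisibility in a monoid. -/
def LeftDvd {M : Type*} [Monoid M] (a b : M) : Prop := ∃ c, b = a * c

/-- Elements obtained as iterated lcms of right complements of `g`. -/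
inductive JoinOf {M : Type*} [Monoid M] (lcm : M → M → M) (g : M) : M → Prop
  | base (h k : M) : h * k = lcm h g → JoinOf lcm g k
  | join (a b : M) : JoinOf lcm g a → JoinOf lcm g b → JoinOf lcm g (lcm a b)

/-- in a cancellative noetherian (hence atomic) monoid with lcms for
left-divisibility and a quasi-central element `Δ` such that every element
left-divides a power of `Δ`, for every `g` the set of right complements
`{h⁻¹(h ∨ g) : h ∈ M}` has an lcm `Δ_g` for left-divisibility; moreover `g`
left-divides `Δ_g` and `M·Δ_g ⊆ g·M`. -/
theorem stmt_6 (M : Type*) [Monoid M]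
    (hcl : ∀ a b c : M, a * b = a * c → b = c)
    (hcr : ∀ a b c : M, b * a = c * a → b = c)
    (hwf : WellFounded (fun w w' : M => (∃ w1 w2, w' = w1 * w * w2) ∧ w ≠ w'))
    (lcm : M → M → M)
    (hlcm_left : ∀ a b, LeftDvd a (lcm a b))
    (hlcm_right : ∀ a b, LeftDvd b (lcm a b))
    (hlcm_min : ∀ a b k, LeftDvd a k → LeftDvd b k → LeftDvd (lcm a b) k)
    (Δ : M) (hΔqc : QuasiCentral Δ)
    (hΔpow : ∀ g : M, ∃ n : ℕ, LeftDvd g (Δ ^ n))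
    (g : M) :
    ∃ D : M,
      (∀ h k : M, h * k = lcm h g → LeftDvd k D) ∧
      (∀ D' : M, (∀ h k : M, h * k = lcm h g → LeftDvd k D') → LeftDvd D D') ∧
      LeftDvd g D ∧
      (∀ m : M, ∃ m', m * D = g * m') := by
  obtain ⟨n, a, hga⟩ := hΔpow g
  -- powers of Δ are quasi-central
  have hqc : ∀ N : ℕ, ∀ m : M, ∃ m', m * Δ ^ N = Δ ^ N * m' := by
    intro N
    induction N with
    | zero => intro m; exact ⟨m, by simp⟩
    | succ N ih =>
      intro m
      obtain ⟨m1, h1⟩ := ih m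
      obtain ⟨m2, h2⟩ := (hΔqc (m1 * Δ)).mpr ⟨m1, rfl⟩
      refine ⟨m2, ?_⟩
      rw [pow_succ, ← mul_assoc, h1, mul_assoc, h2, ← mul_assoc]
  -- every join of complements left-divides Δ^n
  have hdiv : ∀ t, JoinOf lcm g t → LeftDvd t (Δ ^ n) := by
    intro t ht
    induction ht with
    | base h k hk =>
      obtain ⟨h', hh'⟩ := hqc n h
      have hgdvd : LeftDvd g (h * Δ ^ n) := ⟨a * h', by rw [hh', hga, mul_assoc]⟩
      have hhd : LeftDvd h (h * Δ ^ n) := ⟨Δ ^ n, rfl⟩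
      obtain ⟨c, hc⟩ := hlcm_min h g _ hhd hgdvd
      refine ⟨c, hcl h _ _ ?_⟩
      rw [← mul_assoc, hk]
      exact hc
    | join a' b' ha hb iha ihb => exact hlcm_min a' b' _ iha ihb
  -- every join of complements left-divides any common multiple of all complements
  have hleast : ∀ D' : M, (∀ h k, h * k = lcm h g → LeftDvd k D') →
      ∀ t, JoinOf lcm g t → LeftDvd t D' := by
    intro D' hD' t ht
    induction ht with
    | base h k hk => exact hD' h k hk
    | join a' b' ha hb iha ihb => exact hlcm_min a' b' _ iha ihb
  -- pick a join of complements with factor-minimal cofactor in Δ^n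
  have hSne : ∃ c : M, ∃ t, JoinOf lcm g t ∧ Δ ^ n = t * c := by
    have hj : JoinOf lcm g (lcm 1 g) := JoinOf.base 1 (lcm 1 g) (one_mul _)
    obtain ⟨c, hc⟩ := hdiv _ hj
    exact ⟨c, _, hj, hc⟩
  obtain ⟨c, ⟨t0, ht0, htc⟩, hmin⟩ :=
    hwf.has_min {c : M | ∃ t, JoinOf lcm g t ∧ Δ ^ n = t * c} hSne
  -- t0 is a common multiple of all complements
  have hcm : ∀ h k, h * k = lcm h g → LeftDvd k t0 := by
    intro h k hk
    have hj1 : JoinOf lcm g (lcm t0 k) := JoinOf.join _ _ ht0 (JoinOf.base h k hk)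
    obtain ⟨e, he⟩ := hlcm_left t0 k
    obtain ⟨c1, hc1⟩ := hdiv _ hj1
    have hc1S : c1 ∈ {c : M | ∃ t, JoinOf lcm g t ∧ Δ ^ n = t * c} := ⟨_, hj1, hc1⟩
    have hfac : c = e * c1 := by
      apply hcl t0
      rw [← htc, ← mul_assoc, ← he]
      exact hc1
    have hceq : c1 = c := by
      by_contra hne
      exact hmin c1 hc1S ⟨⟨e, 1, by rw [hfac, mul_one]⟩, hne⟩
    have ht0eq : t0 = lcm t0 k := by
      apply hcr c
      rw [← htc, hc1, hceq]
    rw [ht0eq]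
    exact hlcm_right t0 k
  refine ⟨t0, hcm, fun D' hD' => hleast D' hD' t0 ht0, ?_, ?_⟩
  · obtain ⟨x, hx⟩ := hlcm_right 1 g
    obtain ⟨y, hy⟩ := hcm 1 (lcm 1 g) (one_mul _)
    exact ⟨x * y, by rw [hy, hx, mul_assoc]⟩
  · intro m
    obtain ⟨k, hk⟩ := hlcm_left m g
    obtain ⟨e, he⟩ := hcm m k hk.symm
    obtain ⟨w, hw⟩ := hlcm_right m g
    exact ⟨w * e, by rw [he, ← mul_assoc, hk.symm, hw, mul_assoc]⟩
end

section
/- Let M be a Garside monoid with atom set S, and for each g in M let τ_g denote the smallest quasi-central element of M left-divisible by g (which exists). Then for any two atoms s, t in S, either τ_s = τ_t, or the greatest common divisors τ_s ∧ τ_t (for left-divisibility) and τ_s ∧̃ τ_t (for right-divisibility) are both equal to 1. In either case τ_s τ_t = τ_t τ_s. -/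
/-- Right-divisibility in a monoid. -/
def GarsideRightDvd {M : Type*} [Monoid M] (a b : M) : Prop := ∃ c, b = c * a

/-- An atom of a monoid: a non-identity element that is not a product of two
non-identity elements. -/
def MonAtom {M : Type*} [Monoid M] (a : M) : Prop :=
  a ≠ 1 ∧ ∀ b c : M, a = b * c → b = 1 ∨ c = 1

/-- A Garside-monoid structure on a monoid `M`: `M` is cancellative, noetherian
for the factor relation, its left- and right-divisibility orders are lattices,
and it has a quasi-central Garside element `Δ` whose powers are left-divisible
by every element. -/
structure GarsideStruct (M : Type*) [Monoid M] where
  cancel_left : ∀ a b c : M, a * b = a * c → b = c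
  cancel_right : ∀ a b c : M, b * a = c * a → b = c
  wf : WellFounded (fun w w' : M => (∃ w1 w2, w' = w1 * w * w2) ∧ w ≠ w')
  lcmL : M → M → M
  lcmL_left : ∀ a b, LeftDvd a (lcmL a b)
  lcmL_right : ∀ a b, LeftDvd b (lcmL a b)
  lcmL_min : ∀ a b k, LeftDvd a k → LeftDvd b k → LeftDvd (lcmL a b) k
  gcdL : M → M → M
  gcdL_left : ∀ a b, LeftDvd (gcdL a b) a
  gcdL_right : ∀ a b, LeftDvd (gcdL a b) b
  gcdL_max : ∀ a b k, LeftDvd k a → LeftDvd k b → LeftDvd k (gcdL a b)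
  lcmR : M → M → M
  lcmR_left : ∀ a b, GarsideRightDvd a (lcmR a b)
  lcmR_right : ∀ a b, GarsideRightDvd b (lcmR a b)
  lcmR_min : ∀ a b k, GarsideRightDvd a k → GarsideRightDvd b k → GarsideRightDvd (lcmR a b) k
  gcdR : M → M → M
  gcdR_left : ∀ a b, GarsideRightDvd (gcdR a b) a
  gcdR_right : ∀ a b, GarsideRightDvd (gcdR a b) b
  gcdR_max : ∀ a b k, GarsideRightDvd k a → GarsideRightDvd k b → GarsideRightDvd k (gcdR a b)
  delta : M
  delta_qc : QuasiCentral delta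
  delta_pow : ∀ g : M, ∃ n : ℕ, LeftDvd g (delta ^ n)

namespace Stmt7

variable {M : Type*} [Monoid M]

theorem ldvd_refl (a : M) : LeftDvd a a := ⟨1, (mul_one a).symm⟩

theorem ldvd_trans {a b c : M} : LeftDvd a b → LeftDvd b c → LeftDvd a c
  | ⟨x, hx⟩, ⟨y, hy⟩ => ⟨x * y, by rw [hy, hx, mul_assoc]⟩

theorem rdvd_trans {a b c : M} : GarsideRightDvd a b → GarsideRightDvd b c → GarsideRightDvd a c
  | ⟨x, hx⟩, ⟨y, hy⟩ => ⟨y * x, by rw [hy, hx, mul_assoc]⟩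

theorem wf_no_chain {α : Sort*} {r : α → α → Prop} (wf : WellFounded r) (f : ℕ → α)
    (hf : ∀ n, r (f (n + 1)) (f n)) : False := by
  refine (wf.induction (C := fun a => ∀ g : ℕ → α, g 0 = a → (∀ n, r (g (n + 1)) (g n)) → False)
    (f 0) ?_) f rfl hf
  intro a ih g hg0 hg
  exact ih (g 1) (hg0 ▸ hg 0) (fun n => g (n + 1)) rfl (fun n => hg (n + 1))

theorem wf_asymm {α : Sort*} {r : α → α → Prop} (wf : WellFounded r) {a b : α}
    (h1 : r a b) (h2 : r b a) : False := by
  have H : ∀ b, ∀ a, r a b → r b a → False := by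
    intro b
    refine wf.induction (C := fun b => ∀ a, r a b → r b a → False) b ?_
    intro x ih a hax hxa
    exact ih a hax x hxa hax
  exact H b a h1 h2

theorem factor_eq_one (GS : GarsideStruct M) {x u v : M} (h : x = u * x * v) :
    u = 1 ∧ v = 1 := by
  by_cases hu : u * x = x
  · have hu1 : u = 1 := GS.cancel_right x u 1 (by rw [hu, one_mul])
    rw [hu] at h
    exact ⟨hu1, GS.cancel_left x v 1 (by rw [mul_one]; exact h.symm)⟩
  · exfalso
    exact wf_asymm GS.wf (a := x) (b := u * x)
      ⟨⟨u, 1, by rw [mul_one]⟩, fun he => hu he.symm⟩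
      ⟨⟨1, v, by rw [one_mul]; exact h⟩, hu⟩

theorem mul_eq_one' (GS : GarsideStruct M) {c d : M} (h : c * d = 1) : c = 1 ∧ d = 1 :=
  factor_eq_one GS (x := 1) (by rw [mul_one]; exact h.symm)

theorem ldvd_antisymm (GS : GarsideStruct M) {a b : M}
    (h1 : LeftDvd a b) (h2 : LeftDvd b a) : a = b := by
  obtain ⟨c, hc⟩ := h1
  obtain ⟨d, hd⟩ := h2
  have hcd : c * d = 1 := GS.cancel_left a _ _ (by rw [mul_one, ← mul_assoc, ← hc, ← hd])
  rw [hc, (mul_eq_one' GS hcd).1, mul_one]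

theorem rdvd_antisymm (GS : GarsideStruct M) {a b : M}
    (h1 : GarsideRightDvd a b) (h2 : GarsideRightDvd b a) : a = b := by
  obtain ⟨c, hc⟩ := h1
  obtain ⟨d, hd⟩ := h2
  have hdc : d * c = 1 := GS.cancel_right a _ _ (by rw [one_mul, mul_assoc, ← hc, ← hd])
  rw [hc, (mul_eq_one' GS hdc).2, one_mul]

theorem qc_rdvd_of_ldvd (GS : GarsideStruct M) {a x : M} (ha : QuasiCentral a)
    (h : LeftDvd x a) : GarsideRightDvd x a := by
  obtain ⟨y, hy⟩ := h
  obtain ⟨m, hm⟩ := (ha (a * y)).mp ⟨y, rfl⟩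
  have hm2 : a * y = m * x * y := by rw [hm, hy, mul_assoc]
  exact ⟨m, GS.cancel_right y a (m * x) hm2⟩

theorem qc_ldvd_of_rdvd (GS : GarsideStruct M) {a x : M} (ha : QuasiCentral a)
    (h : GarsideRightDvd x a) : LeftDvd x a := by
  obtain ⟨y, hy⟩ := h
  obtain ⟨u, hu⟩ := (ha (y * a)).mpr ⟨y, rfl⟩
  have hu2 : y * a = y * (x * u) := by rw [hu, hy, mul_assoc]
  exact ⟨u, GS.cancel_left y a (x * u) hu2⟩

theorem qc_gcd_eq (GS : GarsideStruct M) {a b : M} (ha : QuasiCentral a)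
    (hb : QuasiCentral b) : GS.gcdL a b = GS.gcdR a b := by
  have h1 : GarsideRightDvd (GS.gcdL a b) (GS.gcdR a b) :=
    GS.gcdR_max a b _ (qc_rdvd_of_ldvd GS ha (GS.gcdL_left a b))
      (qc_rdvd_of_ldvd GS hb (GS.gcdL_right a b))
  have h2 : LeftDvd (GS.gcdR a b) (GS.gcdL a b) :=
    GS.gcdL_max a b _ (qc_ldvd_of_rdvd GS ha (GS.gcdR_left a b))
      (qc_ldvd_of_rdvd GS hb (GS.gcdR_right a b))
  obtain ⟨w, hw⟩ := h1
  obtain ⟨v, hv⟩ := h2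
  have h3 : GS.gcdL a b = w * GS.gcdL a b * v := by
    conv_lhs => rw [hv, hw]
  obtain ⟨hw1, hv1⟩ := factor_eq_one GS h3
  rw [hv, hv1, mul_one]

theorem qc_lcm_eq (GS : GarsideStruct M) {a b : M} (ha : QuasiCentral a)
    (hb : QuasiCentral b) : GS.lcmL a b = GS.lcmR a b := by
  have h1 : GarsideRightDvd (GS.lcmR a b) (GS.lcmL a b) :=
    GS.lcmR_min a b _ ((ha _).mp (GS.lcmL_left a b)) ((hb _).mp (GS.lcmL_right a b))
  have h2 : LeftDvd (GS.lcmL a b) (GS.lcmR a b) :=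
    GS.lcmL_min a b _ ((ha _).mpr (GS.lcmR_left a b)) ((hb _).mpr (GS.lcmR_right a b))
  obtain ⟨w, hw⟩ := h1
  obtain ⟨v, hv⟩ := h2
  have h3 : GS.lcmL a b = w * GS.lcmL a b * v := by
    conv_lhs => rw [hw]
    rw [hv, ← mul_assoc]
  obtain ⟨hw1, hv1⟩ := factor_eq_one GS h3
  rw [hv, hv1, mul_one]

theorem ldvd_mul_compat {u v : M} (x : M) (h : LeftDvd u v) : LeftDvd (x * u) (x * v) :=
  let ⟨c, hc⟩ := h; ⟨c, by rw [hc, mul_assoc]⟩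

theorem rdvd_mul_compat {u v : M} (x : M) (h : GarsideRightDvd u v) : GarsideRightDvd (u * x) (v * x) :=
  let ⟨c, hc⟩ := h; ⟨c, by rw [hc, mul_assoc]⟩

theorem gcdL_mul_left (GS : GarsideStruct M) (x a b : M) :
    GS.gcdL (x * a) (x * b) = x * GS.gcdL a b := by
  apply ldvd_antisymm GS
  · obtain ⟨e, he⟩ := GS.gcdL_max (x * a) (x * b) x ⟨a, rfl⟩ ⟨b, rfl⟩
    have h1 : LeftDvd e a := by
      obtain ⟨k, hk⟩ := GS.gcdL_left (x * a) (x * b)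
      exact ⟨k, GS.cancel_left x a (e * k) (by rw [← mul_assoc, ← he, ← hk])⟩
    have h2 : LeftDvd e b := by
      obtain ⟨k, hk⟩ := GS.gcdL_right (x * a) (x * b)
      exact ⟨k, GS.cancel_left x b (e * k) (by rw [← mul_assoc, ← he, ← hk])⟩
    rw [he]
    exact ldvd_mul_compat x (GS.gcdL_max a b e h1 h2)
  · exact GS.gcdL_max (x * a) (x * b) _ (ldvd_mul_compat x (GS.gcdL_left a b))
      (ldvd_mul_compat x (GS.gcdL_right a b))

theorem gcdR_mul_right (GS : GarsideStruct M) (x a b : M) :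
    GS.gcdR (a * x) (b * x) = GS.gcdR a b * x := by
  apply rdvd_antisymm GS
  · obtain ⟨e, he⟩ := GS.gcdR_max (a * x) (b * x) x ⟨a, rfl⟩ ⟨b, rfl⟩
    have h1 : GarsideRightDvd e a := by
      obtain ⟨k, hk⟩ := GS.gcdR_left (a * x) (b * x)
      exact ⟨k, GS.cancel_right x a (k * e) (by rw [mul_assoc, ← he, ← hk])⟩
    have h2 : GarsideRightDvd e b := by
      obtain ⟨k, hk⟩ := GS.gcdR_right (a * x) (b * x)
      exact ⟨k, GS.cancel_right x b (k * e) (by rw [mul_assoc, ← he, ← hk])⟩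
    rw [he]
    exact rdvd_mul_compat x (GS.gcdR_max a b e h1 h2)
  · exact GS.gcdR_max (a * x) (b * x) _ (rdvd_mul_compat x (GS.gcdR_left a b))
      (rdvd_mul_compat x (GS.gcdR_right a b))

theorem lcmL_mul_left (GS : GarsideStruct M) (x a b : M) :
    GS.lcmL (x * a) (x * b) = x * GS.lcmL a b := by
  apply ldvd_antisymm GS
  · exact GS.lcmL_min (x * a) (x * b) _ (ldvd_mul_compat x (GS.lcmL_left a b))
      (ldvd_mul_compat x (GS.lcmL_right a b))
  · obtain ⟨f, hf⟩ := ldvd_trans (⟨a, rfl⟩ : LeftDvd x (x * a)) (GS.lcmL_left (x * a) (x * b))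
    have h1 : LeftDvd a f := by
      obtain ⟨k, hk⟩ := GS.lcmL_left (x * a) (x * b)
      exact ⟨k, GS.cancel_left x f (a * k) (by rw [← mul_assoc, ← hf, hk])⟩
    have h2 : LeftDvd b f := by
      obtain ⟨k, hk⟩ := GS.lcmL_right (x * a) (x * b)
      exact ⟨k, GS.cancel_left x f (b * k) (by rw [← mul_assoc, ← hf, hk])⟩
    rw [hf]
    exact ldvd_mul_compat x (GS.lcmL_min a b f h1 h2)

theorem lcmR_mul_right (GS : GarsideStruct M) (x a b : M) :
    GS.lcmR (a * x) (b * x) = GS.lcmR a b * x := by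
  apply rdvd_antisymm GS
  · exact GS.lcmR_min (a * x) (b * x) _ (rdvd_mul_compat x (GS.lcmR_left a b))
      (rdvd_mul_compat x (GS.lcmR_right a b))
  · obtain ⟨f, hf⟩ := rdvd_trans (⟨a, rfl⟩ : GarsideRightDvd x (a * x)) (GS.lcmR_left (a * x) (b * x))
    have h1 : GarsideRightDvd a f := by
      obtain ⟨k, hk⟩ := GS.lcmR_left (a * x) (b * x)
      exact ⟨k, GS.cancel_right x f (k * a) (by rw [mul_assoc, ← hf, hk])⟩
    have h2 : GarsideRightDvd b f := by
      obtain ⟨k, hk⟩ := GS.lcmR_right (a * x) (b * x)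
      exact ⟨k, GS.cancel_right x f (k * b) (by rw [mul_assoc, ← hf, hk])⟩
    rw [hf]
    exact rdvd_mul_compat x (GS.lcmR_min a b f h1 h2)

theorem qc_gcdL (GS : GarsideStruct M) {a b : M} (ha : QuasiCentral a)
    (hb : QuasiCentral b) : QuasiCentral (GS.gcdL a b) := by
  have hcc' : GS.gcdL a b = GS.gcdR a b := qc_gcd_eq GS ha hb
  intro x
  constructor
  · rintro ⟨m, rfl⟩
    rw [hcc']
    obtain ⟨m1, hm1⟩ := (ha (a * m)).mp ⟨m, rfl⟩
    obtain ⟨m2, hm2⟩ := (hb (b * m)).mp ⟨m, rfl⟩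
    have h1 : GarsideRightDvd (GS.gcdR a b) (a * m) :=
      rdvd_trans (GS.gcdR_left a b) ⟨m1, hm1⟩
    have h2 : GarsideRightDvd (GS.gcdR a b) (b * m) :=
      rdvd_trans (GS.gcdR_right a b) ⟨m2, hm2⟩
    have h3 := GS.gcdR_max (a * m) (b * m) _ h1 h2
    rw [gcdR_mul_right GS m a b] at h3
    exact h3
  · rintro ⟨m, rfl⟩
    obtain ⟨m1, hm1⟩ := (ha (m * a)).mpr ⟨m, rfl⟩
    obtain ⟨m2, hm2⟩ := (hb (m * b)).mpr ⟨m, rfl⟩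
    have h1 : LeftDvd (GS.gcdL a b) (m * a) :=
      ldvd_trans (GS.gcdL_left a b) ⟨m1, hm1⟩
    have h2 : LeftDvd (GS.gcdL a b) (m * b) :=
      ldvd_trans (GS.gcdL_right a b) ⟨m2, hm2⟩
    have h3 := GS.gcdL_max (m * a) (m * b) _ h1 h2
    rw [gcdL_mul_left GS m a b] at h3
    exact h3

theorem qc_lcmL (GS : GarsideStruct M) {a b : M} (ha : QuasiCentral a)
    (hb : QuasiCentral b) : QuasiCentral (GS.lcmL a b) := by
  have hll' : GS.lcmL a b = GS.lcmR a b := qc_lcm_eq GS ha hb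
  intro x
  constructor
  · rintro ⟨m, rfl⟩
    rw [hll']
    obtain ⟨m1, hm1⟩ := (ha (a * m)).mp ⟨m, rfl⟩
    obtain ⟨m2, hm2⟩ := (hb (b * m)).mp ⟨m, rfl⟩
    have h1 : GarsideRightDvd a (GS.lcmR (a * m) (b * m)) :=
      rdvd_trans ⟨m1, hm1⟩ (GS.lcmR_left (a * m) (b * m))
    have h2 : GarsideRightDvd b (GS.lcmR (a * m) (b * m)) :=
      rdvd_trans ⟨m2, hm2⟩ (GS.lcmR_right (a * m) (b * m))
    have h3 := GS.lcmR_min a b _ h1 h2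
    rw [lcmR_mul_right GS m a b] at h3
    exact h3
  · rintro ⟨m, rfl⟩
    obtain ⟨m1, hm1⟩ := (ha (m * a)).mpr ⟨m, rfl⟩
    obtain ⟨m2, hm2⟩ := (hb (m * b)).mpr ⟨m, rfl⟩
    have h1 : LeftDvd a (GS.lcmL (m * a) (m * b)) :=
      ldvd_trans ⟨m1, hm1⟩ (GS.lcmL_left (m * a) (m * b))
    have h2 : LeftDvd b (GS.lcmL (m * a) (m * b)) :=
      ldvd_trans ⟨m2, hm2⟩ (GS.lcmL_right (m * a) (m * b))
    have h3 := GS.lcmL_min a b _ h1 h2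
    rw [lcmL_mul_left GS m a b] at h3
    exact h3

/-- If `a = b * u` with `a, b` quasi-central, then `u` is quasi-central. -/
theorem qc_compl_right (GS : GarsideStruct M) {a b u : M} (ha : QuasiCentral a)
    (hb : QuasiCentral b) (h : a = b * u) : QuasiCentral u := by
  intro x
  constructor
  · rintro ⟨m, rfl⟩
    obtain ⟨m1, hm1⟩ := (ha (a * m)).mp ⟨m, rfl⟩
    obtain ⟨m2, hm2⟩ := (hb (m1 * b)).mpr ⟨m1, rfl⟩
    refine ⟨m2, GS.cancel_left b _ _ ?_⟩
    rw [← mul_assoc, ← h, hm1, h, ← mul_assoc, hm2, mul_assoc]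
  · rintro ⟨m, rfl⟩
    obtain ⟨m2, hm2⟩ := (hb (b * m)).mp ⟨m, rfl⟩
    obtain ⟨m3, hm3⟩ := (ha (m2 * a)).mpr ⟨m2, rfl⟩
    refine ⟨m3, GS.cancel_left b _ _ ?_⟩
    rw [← mul_assoc, hm2, mul_assoc, ← h, hm3, h, mul_assoc]

/-- If `a = u * b` with `a, b` quasi-central, then `u` is quasi-central. -/
theorem qc_compl_left (GS : GarsideStruct M) {a b u : M} (ha : QuasiCentral a)
    (hb : QuasiCentral b) (h : a = u * b) : QuasiCentral u := by
  intro x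
  constructor
  · rintro ⟨m, rfl⟩
    obtain ⟨m1, hm1⟩ := (hb (m * b)).mpr ⟨m, rfl⟩
    obtain ⟨m2, hm2⟩ := (ha (a * m1)).mp ⟨m1, rfl⟩
    refine ⟨m2, GS.cancel_right b _ _ ?_⟩
    rw [mul_assoc, mul_assoc, hm1, ← mul_assoc, ← h, hm2, h, ← mul_assoc]
  · rintro ⟨m, rfl⟩
    obtain ⟨m1, hm1⟩ := (ha (m * a)).mpr ⟨m, rfl⟩
    obtain ⟨m2, hm2⟩ := (hb (b * m1)).mp ⟨m1, rfl⟩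
    refine ⟨m2, GS.cancel_right b _ _ ?_⟩
    rw [mul_assoc, ← h, hm1, h, mul_assoc, hm2, ← mul_assoc]

/-- Conjugation by a quasi-central element: `x * p = p * qcConj p hp x`. -/
noncomputable def qcConj (p : M) (hp : QuasiCentral p) (x : M) : M :=
  Classical.choose ((hp (x * p)).mpr ⟨x, rfl⟩)

theorem qcConj_spec (p : M) (hp : QuasiCentral p) (x : M) :
    x * p = p * qcConj p hp x :=
  Classical.choose_spec ((hp (x * p)).mpr ⟨x, rfl⟩)

theorem qcConj_mul (GS : GarsideStruct M) (p : M) (hp : QuasiCentral p) (x y : M) :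
    qcConj p hp (x * y) = qcConj p hp x * qcConj p hp y := by
  apply GS.cancel_left p
  rw [← qcConj_spec p hp (x * y), mul_assoc, qcConj_spec p hp y, ← mul_assoc,
    qcConj_spec p hp x, mul_assoc]

theorem qcConj_one (GS : GarsideStruct M) (p : M) (hp : QuasiCentral p) :
    qcConj p hp 1 = 1 := by
  apply GS.cancel_left p
  rw [← qcConj_spec p hp 1, one_mul, mul_one]

theorem qcConj_self (GS : GarsideStruct M) (p : M) (hp : QuasiCentral p) :
    qcConj p hp p = p := by
  apply GS.cancel_left p
  rw [← qcConj_spec p hp p]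

theorem qcConj_inj (GS : GarsideStruct M) (p : M) (hp : QuasiCentral p) :
    Function.Injective (qcConj p hp) := by
  intro x y hxy
  apply GS.cancel_right p
  rw [qcConj_spec p hp x, qcConj_spec p hp y, hxy]

theorem qcConj_surj (GS : GarsideStruct M) (p : M) (hp : QuasiCentral p) :
    Function.Surjective (qcConj p hp) := by
  intro y
  obtain ⟨x, hx⟩ := (hp (p * y)).mp ⟨y, rfl⟩
  refine ⟨x, GS.cancel_left p _ _ ?_⟩
  rw [← qcConj_spec p hp x, ← hx]

theorem qcConj_ldvd (GS : GarsideStruct M) (p : M) (hp : QuasiCentral p) {u v : M}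
    (h : LeftDvd u v) : LeftDvd (qcConj p hp u) (qcConj p hp v) := by
  obtain ⟨c, hc⟩ := h
  exact ⟨qcConj p hp c, by rw [hc, qcConj_mul GS]⟩

theorem qcConj_ldvd_rev (GS : GarsideStruct M) (p : M) (hp : QuasiCentral p) {u v : M}
    (h : LeftDvd (qcConj p hp u) (qcConj p hp v)) : LeftDvd u v := by
  obtain ⟨c, hc⟩ := h
  obtain ⟨c', rfl⟩ := qcConj_surj GS p hp c
  rw [← qcConj_mul GS] at hc
  exact ⟨c', qcConj_inj GS p hp hc⟩

theorem qcConj_rdvd (GS : GarsideStruct M) (p : M) (hp : QuasiCentral p) {u v : M}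
    (h : GarsideRightDvd u v) : GarsideRightDvd (qcConj p hp u) (qcConj p hp v) := by
  obtain ⟨c, hc⟩ := h
  exact ⟨qcConj p hp c, by rw [hc, qcConj_mul GS]⟩

theorem qcConj_rdvd_rev (GS : GarsideStruct M) (p : M) (hp : QuasiCentral p) {u v : M}
    (h : GarsideRightDvd (qcConj p hp u) (qcConj p hp v)) : GarsideRightDvd u v := by
  obtain ⟨c, hc⟩ := h
  obtain ⟨c', rfl⟩ := qcConj_surj GS p hp c
  rw [← qcConj_mul GS] at hc
  exact ⟨c', qcConj_inj GS p hp hc⟩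

theorem qcConj_atom (GS : GarsideStruct M) (p : M) (hp : QuasiCentral p) {r : M}
    (hr : MonAtom r) : MonAtom (qcConj p hp r) := by
  constructor
  · intro he
    exact hr.1 (qcConj_inj GS p hp (by rw [he, qcConj_one GS]))
  · intro u v huv
    obtain ⟨u', rfl⟩ := qcConj_surj GS p hp u
    obtain ⟨v', rfl⟩ := qcConj_surj GS p hp v
    rw [← qcConj_mul GS] at huv
    rcases hr.2 u' v' (qcConj_inj GS p hp huv) with h1 | h1
    · exact Or.inl (by rw [h1, qcConj_one GS])
    · exact Or.inr (by rw [h1, qcConj_one GS])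

theorem qcConj_qc (GS : GarsideStruct M) (p : M) (hp : QuasiCentral p) {g : M}
    (hg : QuasiCentral g) : QuasiCentral (qcConj p hp g) := by
  intro x
  constructor
  · rintro ⟨m, rfl⟩
    obtain ⟨m', rfl⟩ := qcConj_surj GS p hp m
    obtain ⟨w, hw⟩ := (hg (g * m')).mp ⟨m', rfl⟩
    exact ⟨qcConj p hp w, by rw [← qcConj_mul GS, hw, qcConj_mul GS]⟩
  · rintro ⟨m, rfl⟩
    obtain ⟨m', rfl⟩ := qcConj_surj GS p hp m
    obtain ⟨w, hw⟩ := (hg (m' * g)).mpr ⟨m', rfl⟩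
    exact ⟨qcConj p hp w, by rw [← qcConj_mul GS, hw, qcConj_mul GS]⟩

theorem qcConj_qc_rev (GS : GarsideStruct M) (p : M) (hp : QuasiCentral p) {g : M}
    (hg : QuasiCentral (qcConj p hp g)) : QuasiCentral g := by
  intro x
  constructor
  · rintro ⟨m, rfl⟩
    obtain ⟨w, hw⟩ := (hg (qcConj p hp g * qcConj p hp m)).mp ⟨qcConj p hp m, rfl⟩
    obtain ⟨w', rfl⟩ := qcConj_surj GS p hp w
    rw [← qcConj_mul GS, ← qcConj_mul GS] at hw
    exact ⟨w', qcConj_inj GS p hp hw⟩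
  · rintro ⟨m, rfl⟩
    obtain ⟨w, hw⟩ := (hg (qcConj p hp m * qcConj p hp g)).mpr ⟨qcConj p hp m, rfl⟩
    obtain ⟨w', rfl⟩ := qcConj_surj GS p hp w
    rw [← qcConj_mul GS, ← qcConj_mul GS] at hw
    exact ⟨w', qcConj_inj GS p hp hw⟩

theorem qcConj_tau (GS : GarsideStruct M) (p : M) (hp : QuasiCentral p)
    (τ : M → M) (hτqc : ∀ g, QuasiCentral (τ g)) (hτdvd : ∀ g, LeftDvd g (τ g))
    (hτmin : ∀ g h, QuasiCentral h → LeftDvd g h → LeftDvd (τ g) h) (g : M) :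
    qcConj p hp (τ g) = τ (qcConj p hp g) := by
  apply ldvd_antisymm GS
  · obtain ⟨h', hh'⟩ := qcConj_surj GS p hp (τ (qcConj p hp g))
    have hh'qc : QuasiCentral h' := qcConj_qc_rev GS p hp (hh' ▸ hτqc (qcConj p hp g))
    have hgd : LeftDvd g h' := by
      refine qcConj_ldvd_rev GS p hp ?_
      rw [hh']
      exact hτdvd (qcConj p hp g)
    have := qcConj_ldvd GS p hp (hτmin g h' hh'qc hgd)
    rw [hh'] at this
    exact this
  · exact hτmin (qcConj p hp g) (qcConj p hp (τ g)) (qcConj_qc GS p hp (hτqc g))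
      (qcConj_ldvd GS p hp (hτdvd g))

theorem qc_descent (GS : GarsideStruct M) {p z w : M} (hp : QuasiCentral p)
    (hp1 : p ≠ 1) (h : w = p * qcConj p hp w * z) : False := by
  set c : M → M := qcConj p hp with hc
  have hitmul : ∀ n (x y : M), c^[n] (x * y) = c^[n] x * c^[n] y := by
    intro n
    induction n with
    | zero => intro x y; simp
    | succ n ih =>
      intro x y
      rw [Function.iterate_succ_apply', Function.iterate_succ_apply',
        Function.iterate_succ_apply', ih, hc, qcConj_mul GS]
  have hitinj : ∀ n, Function.Injective (c^[n]) :=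
    fun n => Function.Injective.iterate (qcConj_inj GS p hp) n
  have hcw : c w ≠ w := by
    intro he
    rw [he] at h
    exact hp1 (factor_eq_one GS h).1
  refine wf_no_chain GS.wf (fun n => c^[n] w) ?_
  intro n
  constructor
  · refine ⟨c^[n] p, c^[n] z, ?_⟩
    have := congrArg (c^[n]) h
    rw [hitmul n, hitmul n, ← Function.iterate_succ_apply] at this
    exact this
  · intro he
    apply hcw
    apply hitinj n
    rw [← Function.iterate_succ_apply]
    exact he

theorem exists_atom_ldvd (GS : GarsideStruct M) {c : M} (hc : c ≠ 1) :
    ∃ u, MonAtom u ∧ LeftDvd u c := by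
  refine GS.wf.induction (C := fun c => c ≠ 1 → ∃ u, MonAtom u ∧ LeftDvd u c) c ?_ hc
  intro x ih hx
  by_cases hatom : ∀ b d : M, x = b * d → b = 1 ∨ d = 1
  · exact ⟨x, ⟨hx, hatom⟩, ldvd_refl x⟩
  · push_neg at hatom
    obtain ⟨b, d, hbd, hb, hd⟩ := hatom
    have hbx : b ≠ x := by
      rintro rfl
      exact hd (GS.cancel_left b d 1 (by rw [mul_one]; exact hbd.symm))
    obtain ⟨u, hu, hud⟩ := ih b ⟨⟨1, d, by rw [one_mul]; exact hbd⟩, hbx⟩ hb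
    exact ⟨u, hu, ldvd_trans hud ⟨d, hbd⟩⟩

theorem tau_ne_one (GS : GarsideStruct M) (τ : M → M) (hτdvd : ∀ g, LeftDvd g (τ g))
    {u : M} (hu : u ≠ 1) : τ u ≠ 1 := by
  intro he
  obtain ⟨m, hm⟩ := hτdvd u
  rw [he] at hm
  exact hu (mul_eq_one' GS hm.symm).1

/-- Key lemma: `τ r` is an atom of the quasi-center, for `r` an atom. -/
theorem tau_atom_mul (GS : GarsideStruct M)
    (τ : M → M) (hτqc : ∀ g, QuasiCentral (τ g)) (hτdvd : ∀ g, LeftDvd g (τ g))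
    (hτmin : ∀ g h, QuasiCentral h → LeftDvd g h → LeftDvd (τ g) h)
    {r p q : M} (hr : MonAtom r) (hp : QuasiCentral p) (hq : QuasiCentral q)
    (h : τ r = p * q) : p = 1 ∨ q = 1 := by
  by_cases hp1 : p = 1
  · exact Or.inl hp1
  by_cases hrp : LeftDvd r p
  · right
    have h1 : LeftDvd (τ r) p := hτmin r p hp hrp
    have h2 : p = τ r := ldvd_antisymm GS ⟨q, h⟩ h1
    rw [← h2] at h
    exact (GS.cancel_left p q 1 (by rw [mul_one]; exact h.symm))
  · exfalso
    -- gcdL r p = 1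
    have hg1 : GS.gcdL r p = 1 := by
      obtain ⟨e, he⟩ := GS.gcdL_left r p
      rcases hr.2 _ _ he with h1 | h1
      · exact h1
      · exfalso
        apply hrp
        rw [h1, mul_one] at he
        rw [he]
        exact GS.gcdL_right r p
    -- the lcm of r and p
    obtain ⟨s1, hs1⟩ := GS.lcmL_right r p
    have hrpq : LeftDvd r (p * q) := h ▸ hτdvd r
    have hl1 : LeftDvd (GS.lcmL r p) (p * q) := GS.lcmL_min r p _ hrpq ⟨q, rfl⟩
    have hl2 : LeftDvd (GS.lcmL r p) (r * p) :=
      GS.lcmL_min r p _ ⟨p, rfl⟩ ((hp (r * p)).mpr ⟨r, rfl⟩)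
    obtain ⟨k, hk⟩ := hl2
    -- r * p = p * qcConj p hp r, hence s1 * k = qcConj p hp r
    have hsk : s1 * k = qcConj p hp r := by
      apply GS.cancel_left p
      rw [← mul_assoc, ← hs1, ← hk, qcConj_spec p hp r]
    rcases (qcConj_atom GS p hp hr).2 s1 k hsk.symm with h1 | h1
    · -- s1 = 1 : then lcm = p and r divides p, contradiction
      apply hrp
      have h2 : GS.lcmL r p = p := by rw [hs1, h1, mul_one]
      exact h2 ▸ GS.lcmL_left r p
    · -- k = 1 : qcConj p hp r left-divides q
      rw [h1, mul_one] at hsk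
      obtain ⟨z, hz⟩ := hl1
      have hzq : q = qcConj p hp r * z := by
        apply GS.cancel_left p
        rw [← mul_assoc, ← hsk, ← hs1, ← hz]
      have hτm : LeftDvd (τ (qcConj p hp r)) q := hτmin _ q hq ⟨z, hzq⟩
      rw [← qcConj_tau GS p hp τ hτqc hτdvd hτmin r, h, qcConj_mul GS,
        qcConj_self GS] at hτm
      obtain ⟨z2, hz2⟩ := hτm
      exact qc_descent GS hp hp1 (z := z2) (w := q) hz2

end Stmt7

open Stmt7

/-- in a Garside monoid, for atoms `s, t`, with `τ_g` the minimal
quasi-central element left-divisible by `g`, either `τ_s = τ_t` or the gcds of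
`τ_s, τ_t` for both divisibility orders are `1`; in either case `τ_s` and
`τ_t` commute. -/
theorem stmt_7 (M : Type*) [Monoid M] (GS : GarsideStruct M)
    (τ : M → M)
    (hτqc : ∀ g, QuasiCentral (τ g))
    (hτdvd : ∀ g, LeftDvd g (τ g))
    (hτmin : ∀ g h, QuasiCentral h → LeftDvd g h → LeftDvd (τ g) h)
    (s t : M) (hs : MonAtom s) (ht : MonAtom t) :
    (τ s = τ t ∨ (GS.gcdL (τ s) (τ t) = 1 ∧ GS.gcdR (τ s) (τ t) = 1)) ∧
      τ s * τ t = τ t * τ s := by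
  have haq := hτqc s
  have hbq := hτqc t
  have hane : τ s ≠ 1 := tau_ne_one GS τ hτdvd hs.1
  have hbne : τ t ≠ 1 := tau_ne_one GS τ hτdvd ht.1
  by_cases hc : GS.gcdL (τ s) (τ t) = 1
  · -- the gcds are 1; show the lcm is both products
    have hgR : GS.gcdR (τ s) (τ t) = 1 := by rw [← qc_gcd_eq GS haq hbq]; exact hc
    have hlq : QuasiCentral (GS.lcmL (τ s) (τ t)) := qc_lcmL GS haq hbq
    obtain ⟨b', hb'⟩ := GS.lcmL_left (τ s) (τ t)
    have hlab : LeftDvd (GS.lcmL (τ s) (τ t)) (τ s * τ t) :=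
      GS.lcmL_min _ _ _ ⟨τ t, rfl⟩ ((hbq (τ s * τ t)).mpr ⟨τ s, rfl⟩)
    obtain ⟨k, hk⟩ := hlab
    have hbbk : τ t = b' * k :=
      GS.cancel_left (τ s) _ _ (by rw [← mul_assoc, ← hb', ← hk])
    have hb'q : QuasiCentral b' := qc_compl_right GS hlq haq hb'
    have hkq : QuasiCentral k := qc_compl_right GS hbq hb'q hbbk
    have hlab2 : GS.lcmL (τ s) (τ t) = τ s * τ t := by
      rcases tau_atom_mul GS τ hτqc hτdvd hτmin ht hb'q hkq hbbk with h1 | h1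
      · exfalso
        rw [h1, mul_one] at hb'
        have hts : LeftDvd (τ t) (τ s) := hb' ▸ GS.lcmL_right (τ s) (τ t)
        have h2 := GS.gcdL_max (τ s) (τ t) (τ t) hts (ldvd_refl _)
        rw [hc] at h2
        obtain ⟨m, hm⟩ := h2
        exact hbne (mul_eq_one' GS hm.symm).1
      · rw [h1, mul_one] at hbbk
        rw [hb', ← hbbk]
    obtain ⟨a', ha'⟩ := GS.lcmL_right (τ s) (τ t)
    have hlba : LeftDvd (GS.lcmL (τ s) (τ t)) (τ t * τ s) :=
      GS.lcmL_min _ _ _ ((haq (τ t * τ s)).mpr ⟨τ t, rfl⟩) ⟨τ s, rfl⟩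
    obtain ⟨k', hk'⟩ := hlba
    have haak : τ s = a' * k' :=
      GS.cancel_left (τ t) _ _ (by rw [← mul_assoc, ← ha', ← hk'])
    have ha'q : QuasiCentral a' := qc_compl_right GS hlq hbq ha'
    have hk'q : QuasiCentral k' := qc_compl_right GS haq ha'q haak
    have hlba2 : GS.lcmL (τ s) (τ t) = τ t * τ s := by
      rcases tau_atom_mul GS τ hτqc hτdvd hτmin hs ha'q hk'q haak with h1 | h1
      · exfalso
        rw [h1, mul_one] at ha'
        have hst : LeftDvd (τ s) (τ t) := ha' ▸ GS.lcmL_left (τ s) (τ t)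
        have h2 := GS.gcdL_max (τ s) (τ t) (τ s) (ldvd_refl _) hst
        rw [hc] at h2
        obtain ⟨m, hm⟩ := h2
        exact hane (mul_eq_one' GS hm.symm).1
      · rw [h1, mul_one] at haak
        rw [ha', ← haak]
    exact ⟨Or.inr ⟨hc, hgR⟩, by rw [← hlab2, hlba2]⟩
  · -- nontrivial gcd: τ s = τ t
    have hcq : QuasiCentral (GS.gcdL (τ s) (τ t)) := qc_gcdL GS haq hbq
    obtain ⟨u, hu, huc⟩ := exists_atom_ldvd GS hc
    have hune : τ u ≠ 1 := tau_ne_one GS τ hτdvd hu.1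
    have hτu : LeftDvd (τ u) (GS.gcdL (τ s) (τ t)) := hτmin u _ hcq huc
    have key : ∀ r : M, MonAtom r → LeftDvd (τ u) (τ r) → τ r = τ u := by
      intro r hr hdvd
      obtain ⟨w, hw⟩ := hdvd
      have hwq : QuasiCentral w := qc_compl_right GS (hτqc r) (hτqc u) hw
      rcases tau_atom_mul GS τ hτqc hτdvd hτmin hr (hτqc u) hwq hw with h1 | h1
      · exact absurd h1 hune
      · rw [hw, h1, mul_one]
    have hseq : τ s = τ u := key s hs (ldvd_trans hτu (GS.gcdL_left _ _))
    have hteq : τ t = τ u := key t ht (ldvd_trans hτu (GS.gcdL_right _ _))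
    have hst : τ s = τ t := by rw [hseq, hteq]
    exact ⟨Or.inl hst, by rw [hst]⟩
end

section
/- Let M be a Garside monoid with Garside element Δ, and let g be an element of QZ(G) of its group of fractions G (so gM = Mg in G). Writing g = a^{-1}b with a, b in M prime to each other for left-divisibility (the left greedy normal form), both a and b lie in QZ(M). Consequently QZ(G) is the group of fractions of QZ(M). -/
namespace Stmt10Aux

variable {M : Type*} [Monoid M] (GS : GarsideStruct M)

/-- Rigidity: `x = v * x * u` forces `v = u = 1`.  Uses noetherianity. -/
lemma conj_self (GS : GarsideStruct M) {x u v : M} (h : x = v * x * u) : v = 1 ∧ u = 1 := by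
  have hpow : ∀ k : ℕ, v ^ k * x * u ^ k = x := by
    intro k
    induction k with
    | zero => simp
    | succ k ih =>
      calc v ^ (k+1) * x * u ^ (k+1) = v ^ k * (v * x * u) * u ^ k := by
            rw [pow_succ, pow_succ']
            simp only [mul_assoc]
        _ = v ^ k * x * u ^ k := by rw [← h]
        _ = x := ih
  obtain ⟨n, w, hw⟩ := GS.delta_pow x
  -- hw : Δ^n = x * w
  have ht : ∀ k : ℕ, v ^ k * (x * u ^ k * w) = GS.delta ^ n := by
    intro k
    calc v ^ k * (x * u ^ k * w) = (v ^ k * x * u ^ k) * w := by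
          rw [← mul_assoc, ← mul_assoc]
      _ = x * w := by rw [hpow k]
      _ = GS.delta ^ n := hw.symm
  have hstep : ∀ k : ℕ, x * u ^ k * w = v * (x * u ^ (k+1) * w) := by
    intro k
    refine GS.cancel_left (v ^ k) _ _ ?_
    rw [ht k, ← mul_assoc, ← pow_succ, ht (k+1)]
  have hv : v = 1 := by
    by_contra hv
    have key : ∀ y : M, ∀ k : ℕ, x * u ^ k * w = y → False := by
      refine fun y => GS.wf.induction
        (C := fun y => ∀ k : ℕ, x * u ^ k * w = y → False) y ?_
      intro z ih k hk
      refine ih (x * u ^ (k+1) * w) ⟨⟨v, 1, ?_⟩, ?_⟩ (k+1) rfl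
      · rw [mul_one, ← hk]; exact hstep k
      · intro heq
        have h1 : x * u ^ (k+1) * w = v * (x * u ^ (k+1) * w) :=
          (heq.trans hk.symm).trans (hstep k)
        have h2 : (1 : M) * (x * u ^ (k+1) * w) = v * (x * u ^ (k+1) * w) := by
          rw [one_mul]; exact h1
        exact hv (GS.cancel_right _ 1 v h2).symm
    exact key (x * u ^ 0 * w) 0 rfl
  have hu : u = 1 := by
    have h2 : x * 1 = x * u := by
      rw [mul_one]
      calc x = v * x * u := h
        _ = 1 * x * u := by rw [hv]
        _ = x * u := by rw [one_mul]
    exact (GS.cancel_left x 1 u h2).symm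
  exact ⟨hv, hu⟩

lemma mul_eq_one (GS : GarsideStruct M) {u v : M} (h : u * v = 1) : u = 1 ∧ v = 1 :=
  conj_self GS (x := (1 : M)) (v := u) (u := v)
    (by rw [mul_one, h] : (1 : M) = u * 1 * v)

lemma leftdvd_one (GS : GarsideStruct M) {t : M} (h : LeftDvd t 1) : t = 1 := by
  obtain ⟨c, hc⟩ := h
  exact (mul_eq_one GS hc.symm).1

lemma rightdvd_one (GS : GarsideStruct M) {t : M} (h : GarsideRightDvd t 1) : t = 1 := by
  obtain ⟨c, hc⟩ := h
  exact (mul_eq_one GS hc.symm).2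

lemma qc_one : QuasiCentral (1 : M) := by
  intro x
  constructor
  · rintro ⟨m, rfl⟩; exact ⟨m, by rw [one_mul, mul_one]⟩
  · rintro ⟨m, rfl⟩; exact ⟨m, by rw [one_mul, mul_one]⟩

lemma qc_mul {p q : M} (hp : QuasiCentral p) (hq : QuasiCentral q) :
    QuasiCentral (p * q) := by
  intro x
  constructor
  · rintro ⟨m, rfl⟩
    obtain ⟨m1, hm1⟩ := (hq (q * m)).1 ⟨m, rfl⟩
    obtain ⟨m2, hm2⟩ := (hp (p * m1)).1 ⟨m1, rfl⟩
    refine ⟨m2, ?_⟩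
    calc p * q * m = p * (q * m) := by rw [mul_assoc]
      _ = p * (m1 * q) := by rw [hm1]
      _ = p * m1 * q := by rw [mul_assoc]
      _ = m2 * p * q := by rw [hm2]
      _ = m2 * (p * q) := by rw [mul_assoc]
  · rintro ⟨m, rfl⟩
    obtain ⟨m1, hm1⟩ := (hp (m * p)).2 ⟨m, rfl⟩
    obtain ⟨m2, hm2⟩ := (hq (m1 * q)).2 ⟨m1, rfl⟩
    refine ⟨m2, ?_⟩
    calc m * (p * q) = m * p * q := by rw [mul_assoc]
      _ = p * m1 * q := by rw [hm1]
      _ = p * (m1 * q) := by rw [mul_assoc]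
      _ = p * (q * m2) := by rw [hm2]
      _ = p * q * m2 := by rw [mul_assoc]

lemma qc_pow (n : ℕ) : QuasiCentral (GS.delta ^ n) := by
  induction n with
  | zero => rw [pow_zero]; exact qc_one
  | succ n ih => rw [pow_succ]; exact qc_mul ih GS.delta_qc

lemma delta_pow_right (x : M) : ∃ n : ℕ, GarsideRightDvd x (GS.delta ^ n) := by
  obtain ⟨n, w, hw⟩ := GS.delta_pow x
  obtain ⟨w', hw'⟩ := (qc_pow GS n (GS.delta ^ n * w)).1 ⟨w, rfl⟩
  refine ⟨n, w', ?_⟩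
  apply GS.cancel_right w
  rw [mul_assoc, ← hw]
  exact hw'

lemma left_common (x y : M) :
    ∃ N : ℕ, LeftDvd x (GS.delta ^ N) ∧ LeftDvd y (GS.delta ^ N) := by
  obtain ⟨n1, c1, h1⟩ := GS.delta_pow x
  obtain ⟨n2, c2, h2⟩ := GS.delta_pow y
  refine ⟨n1 + n2, ⟨c1 * GS.delta ^ n2, ?_⟩, ⟨c2 * GS.delta ^ n1, ?_⟩⟩
  · rw [pow_add, h1, mul_assoc]
  · rw [add_comm, pow_add, h2, mul_assoc]

lemma right_common (x y : M) :
    ∃ N : ℕ, GarsideRightDvd x (GS.delta ^ N) ∧ GarsideRightDvd y (GS.delta ^ N) := by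
  obtain ⟨n1, c1, h1⟩ := delta_pow_right GS x
  obtain ⟨n2, c2, h2⟩ := delta_pow_right GS y
  refine ⟨n1 + n2, ⟨GS.delta ^ n2 * c1, ?_⟩, ⟨GS.delta ^ n1 * c2, ?_⟩⟩
  · rw [add_comm, pow_add, h1, mul_assoc]
  · rw [pow_add, h2, mul_assoc]

/-- Lemma A: minimality of a reduced left fraction. -/
lemma fracL {G : Type*} [Group G] (φ : M →* G) (hφ : Function.Injective φ)
    {a b c d : M} (hab : GS.gcdL a b = 1)
    (h : (φ c)⁻¹ * φ d = (φ a)⁻¹ * φ b) :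
    ∃ e, c = e * a ∧ d = e * b := by
  obtain ⟨N, ⟨ca, hca⟩, ⟨cb, hcb⟩⟩ := left_common GS a b
  -- hca : Δ^N = a * ca, hcb : Δ^N = b * cb
  have key : φ c * (φ a)⁻¹ = φ d * (φ b)⁻¹ := by
    have h' : φ d = φ c * ((φ a)⁻¹ * φ b) := by rw [← h]; group
    rw [h']; group
  have hw : c * ca = d * cb := by
    apply hφ
    have e1 : φ a * φ ca = φ (GS.delta ^ N) := by rw [← map_mul, ← hca]
    have e2 : φ b * φ cb = φ (GS.delta ^ N) := by rw [← map_mul, ← hcb]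
    calc φ (c * ca) = φ c * ((φ a)⁻¹ * (φ a * φ ca)) := by rw [map_mul]; group
      _ = φ c * (φ a)⁻¹ * φ (GS.delta ^ N) := by rw [e1, ← mul_assoc]
      _ = φ d * (φ b)⁻¹ * φ (GS.delta ^ N) := by rw [key]
      _ = φ d * ((φ b)⁻¹ * (φ b * φ cb)) := by rw [← e2, mul_assoc]
      _ = φ (d * cb) := by rw [map_mul]; group
  obtain ⟨t, htl⟩ : GarsideRightDvd (GS.lcmR ca cb) (GS.delta ^ N) :=
    GS.lcmR_min ca cb _ ⟨a, hca⟩ ⟨b, hcb⟩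
  -- htl : Δ^N = t * lcmR ca cb
  obtain ⟨u, hu⟩ := GS.lcmR_left ca cb
  obtain ⟨v, hv⟩ := GS.lcmR_right ca cb
  have hta : LeftDvd t a := ⟨u, GS.cancel_right ca a (t * u)
    (by rw [← hca, htl, hu, mul_assoc])⟩
  have htb : LeftDvd t b := ⟨v, GS.cancel_right cb b (t * v)
    (by rw [← hcb, htl, hv, mul_assoc])⟩
  have ht' := GS.gcdL_max a b t hta htb
  rw [hab] at ht'
  have ht1 : t = 1 := leftdvd_one GS ht'
  have hlcm : GS.delta ^ N = GS.lcmR ca cb := by rw [htl, ht1, one_mul]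
  have hdvd := GS.lcmR_min ca cb (c * ca) ⟨c, rfl⟩ ⟨d, hw⟩
  rw [← hlcm] at hdvd
  obtain ⟨e, he⟩ := hdvd
  -- he : c * ca = e * Δ^N
  refine ⟨e, ?_, ?_⟩
  · apply GS.cancel_right ca
    rw [mul_assoc, ← hca]
    exact he
  · apply GS.cancel_right cb
    rw [mul_assoc, ← hcb, ← hw]
    exact he

/-- Lemma A': minimality of a reduced right fraction. -/
lemma fracR {G : Type*} [Group G] (φ : M →* G) (hφ : Function.Injective φ)
    {a₀ b₀ c d : M} (hab : GS.gcdR a₀ b₀ = 1)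
    (h : φ d * (φ c)⁻¹ = φ b₀ * (φ a₀)⁻¹) :
    ∃ e, c = a₀ * e ∧ d = b₀ * e := by
  obtain ⟨N, ⟨ta, hta⟩, ⟨tb, htb⟩⟩ := right_common GS a₀ b₀
  -- hta : Δ^N = ta * a₀, htb : Δ^N = tb * b₀
  have key : (φ a₀)⁻¹ * φ c = (φ b₀)⁻¹ * φ d := by
    have h' : φ d = φ b₀ * (φ a₀)⁻¹ * φ c := by rw [← h]; group
    rw [h']; group
  have hw : ta * c = tb * d := by
    apply hφ
    have e1 : φ ta * φ a₀ = φ (GS.delta ^ N) := by rw [← map_mul, ← hta]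
    have e2 : φ tb * φ b₀ = φ (GS.delta ^ N) := by rw [← map_mul, ← htb]
    calc φ (ta * c) = (φ ta * φ a₀) * ((φ a₀)⁻¹ * φ c) := by rw [map_mul]; group
      _ = φ (GS.delta ^ N) * ((φ a₀)⁻¹ * φ c) := by rw [e1]
      _ = φ (GS.delta ^ N) * ((φ b₀)⁻¹ * φ d) := by rw [key]
      _ = (φ tb * φ b₀) * ((φ b₀)⁻¹ * φ d) := by rw [e2]
      _ = φ (tb * d) := by rw [map_mul]; group
  obtain ⟨t, htl⟩ : LeftDvd (GS.lcmL ta tb) (GS.delta ^ N) :=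
    GS.lcmL_min ta tb _ ⟨a₀, hta⟩ ⟨b₀, htb⟩
  -- htl : Δ^N = lcmL ta tb * t
  obtain ⟨u, hu⟩ := GS.lcmL_left ta tb
  obtain ⟨v, hv⟩ := GS.lcmL_right ta tb
  have hdta : GarsideRightDvd t a₀ := ⟨u, GS.cancel_left ta a₀ (u * t)
    (by rw [← hta, htl, hu, mul_assoc])⟩
  have hdtb : GarsideRightDvd t b₀ := ⟨v, GS.cancel_left tb b₀ (v * t)
    (by rw [← htb, htl, hv, mul_assoc])⟩
  have ht' := GS.gcdR_max a₀ b₀ t hdta hdtb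
  rw [hab] at ht'
  have ht1 : t = 1 := rightdvd_one GS ht'
  have hlcm : GS.delta ^ N = GS.lcmL ta tb := by rw [htl, ht1, mul_one]
  have hdvd := GS.lcmL_min ta tb (ta * c) ⟨c, rfl⟩ ⟨d, hw⟩
  rw [← hlcm] at hdvd
  obtain ⟨e, he⟩ := hdvd
  -- he : ta * c = Δ^N * e
  refine ⟨e, ?_, ?_⟩
  · apply GS.cancel_left ta
    rw [← mul_assoc, ← hta]
    exact he
  · apply GS.cancel_left tb
    rw [← mul_assoc, ← htb, ← hw]
    exact he

/-- The complements of a left lcm of a pair with trivial left gcd have trivial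
right gcd. -/
lemma compl_gcdR {a b a₀ b₀ : M} (hb₀ : GS.lcmL a b = a * b₀)
    (ha₀ : GS.lcmL a b = b * a₀) : GS.gcdR a₀ b₀ = 1 := by
  obtain ⟨a₁, ha₁⟩ := GS.gcdR_left a₀ b₀
  obtain ⟨b₁, hb₁⟩ := GS.gcdR_right a₀ b₀
  set s := GS.gcdR a₀ b₀ with hs
  -- ha₁ : a₀ = a₁ * s, hb₁ : b₀ = b₁ * s
  have hcommon : a * b₁ = b * a₁ := by
    apply GS.cancel_right s
    calc a * b₁ * s = a * (b₁ * s) := by rw [mul_assoc]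
      _ = a * b₀ := by rw [← hb₁]
      _ = GS.lcmL a b := hb₀.symm
      _ = b * a₀ := ha₀
      _ = b * (a₁ * s) := by rw [← ha₁]
      _ = b * a₁ * s := by rw [mul_assoc]
  obtain ⟨r, hr⟩ := GS.lcmL_min a b (a * b₁) ⟨b₁, rfl⟩ ⟨a₁, hcommon⟩
  -- hr : a * b₁ = lcmL a b * r
  have h1 : (1 : M) = r * s := by
    apply GS.cancel_left (GS.lcmL a b)
    calc GS.lcmL a b * 1 = a * b₀ := by rw [mul_one, hb₀]
      _ = a * (b₁ * s) := by rw [← hb₁]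
      _ = a * b₁ * s := by rw [mul_assoc]
      _ = GS.lcmL a b * r * s := by rw [hr]
      _ = GS.lcmL a b * (r * s) := by rw [mul_assoc]
  exact (mul_eq_one GS h1.symm).2

/-- Dividing a pair by its left gcd leaves a pair with trivial left gcd. -/
lemma compl_gcdL {c' d' c d : M} (hc : c' = GS.gcdL c' d' * c)
    (hd : d' = GS.gcdL c' d' * d) : GS.gcdL c d = 1 := by
  obtain ⟨c₂, hc₂⟩ := GS.gcdL_left c d
  obtain ⟨d₂, hd₂⟩ := GS.gcdL_right c d
  set s := GS.gcdL c d with hs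
  have h1 : LeftDvd (GS.gcdL c' d' * s) (GS.gcdL c' d') := by
    refine GS.gcdL_max c' d' _ ⟨c₂, ?_⟩ ⟨d₂, ?_⟩
    · calc c' = GS.gcdL c' d' * c := hc
        _ = GS.gcdL c' d' * (s * c₂) := by rw [← hc₂]
        _ = GS.gcdL c' d' * s * c₂ := by rw [mul_assoc]
    · calc d' = GS.gcdL c' d' * d := hd
        _ = GS.gcdL c' d' * (s * d₂) := by rw [← hd₂]
        _ = GS.gcdL c' d' * s * d₂ := by rw [mul_assoc]
  obtain ⟨r, hr⟩ := h1
  have h2 : (1 : M) = s * r := by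
    apply GS.cancel_left (GS.gcdL c' d')
    rw [mul_one, ← mul_assoc]
    exact hr
  exact (mul_eq_one GS h2.symm).1

/-- Main lemma: the numerator and denominator of the reduced left fraction of
a quasi-central element of the group of fractions are quasi-central. -/
lemma main {G : Type*} [Group G] (φ : M →* G) (hφ : Function.Injective φ)
    (g : G) (hg : ∀ x : G, (∃ m : M, x = g * φ m) ↔ (∃ m : M, x = φ m * g))
    (a b : M) (hab : GS.gcdL a b = 1) (hgab : g = (φ a)⁻¹ * φ b) :
    QuasiCentral a ∧ QuasiCentral b := by
  -- the inverse of g is quasi-central as well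
  have hginv : ∀ x : G, (∃ m : M, x = g⁻¹ * φ m) ↔ (∃ m : M, x = φ m * g⁻¹) := by
    intro x
    constructor
    · rintro ⟨m, rfl⟩
      obtain ⟨m₂, hm₂⟩ := (hg (φ m * g)).2 ⟨m, rfl⟩
      refine ⟨m₂, ?_⟩
      calc g⁻¹ * φ m = g⁻¹ * (φ m * g) * g⁻¹ := by group
        _ = g⁻¹ * (g * φ m₂) * g⁻¹ := by rw [hm₂]
        _ = φ m₂ * g⁻¹ := by group
    · rintro ⟨m, rfl⟩
      obtain ⟨m₂, hm₂⟩ := (hg (g * φ m)).1 ⟨m, rfl⟩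
      refine ⟨m₂, ?_⟩
      calc φ m * g⁻¹ = g⁻¹ * (g * φ m) * g⁻¹ := by group
        _ = g⁻¹ * (φ m₂ * g) * g⁻¹ := by rw [hm₂]
        _ = g⁻¹ * φ m₂ := by group
  -- the reduced right fraction of g
  obtain ⟨b₀, hb₀⟩ := GS.lcmL_left a b
  obtain ⟨a₀, ha₀⟩ := GS.lcmL_right a b
  have hab₀ : GS.gcdR a₀ b₀ = 1 := compl_gcdR GS hb₀ ha₀
  have hg' : g = φ b₀ * (φ a₀)⁻¹ := by
    have h1 : φ a * φ b₀ = φ b * φ a₀ := by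
      rw [← map_mul, ← map_mul, ← hb₀, ← ha₀]
    rw [hgab]
    calc (φ a)⁻¹ * φ b = (φ a)⁻¹ * (φ b * φ a₀) * (φ a₀)⁻¹ := by group
      _ = (φ a)⁻¹ * (φ a * φ b₀) * (φ a₀)⁻¹ := by rw [h1]
      _ = φ b₀ * (φ a₀)⁻¹ := by group
  -- the four inclusions
  have incl1 : ∀ m : M, ∃ e, a * m = e * a := by
    intro m
    obtain ⟨m₂, hm₂⟩ := (hg (φ m * g)).2 ⟨m, rfl⟩
    have hfr : (φ (a * m))⁻¹ * φ (b * m₂) = (φ a)⁻¹ * φ b := by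
      rw [map_mul, map_mul, ← hgab]
      calc (φ a * φ m)⁻¹ * (φ b * φ m₂)
          = (φ m)⁻¹ * (((φ a)⁻¹ * φ b) * φ m₂) := by group
        _ = (φ m)⁻¹ * (g * φ m₂) := by rw [← hgab]
        _ = (φ m)⁻¹ * (φ m * g) := by rw [← hm₂]
        _ = g := by group
    obtain ⟨e, he1, _⟩ := fracL GS φ hφ hab hfr
    exact ⟨e, he1⟩
  have incl2 : ∀ m : M, ∃ e, b * m = e * b := by
    intro m
    obtain ⟨m₁, hm₁⟩ := (hg (g * φ m)).1 ⟨m, rfl⟩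
    have hfr : (φ (a * m₁))⁻¹ * φ (b * m) = (φ a)⁻¹ * φ b := by
      rw [map_mul, map_mul, ← hgab]
      calc (φ a * φ m₁)⁻¹ * (φ b * φ m)
          = (φ m₁)⁻¹ * (((φ a)⁻¹ * φ b) * φ m) := by group
        _ = (φ m₁)⁻¹ * (g * φ m) := by rw [← hgab]
        _ = (φ m₁)⁻¹ * (φ m₁ * g) := by rw [hm₁]
        _ = g := by group
    obtain ⟨e, _, he2⟩ := fracL GS φ hφ hab hfr
    exact ⟨e, he2⟩
  have incl3 : ∀ m : M, ∃ e, m * a₀ = a₀ * e := by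
    intro m₂
    obtain ⟨m, hm⟩ := (hg (g * φ m₂)).1 ⟨m₂, rfl⟩
    have hfr : φ (m * b₀) * (φ (m₂ * a₀))⁻¹ = φ b₀ * (φ a₀)⁻¹ := by
      rw [map_mul, map_mul]
      calc φ m * φ b₀ * (φ m₂ * φ a₀)⁻¹
          = φ m * (φ b₀ * (φ a₀)⁻¹) * (φ m₂)⁻¹ := by group
        _ = φ m * g * (φ m₂)⁻¹ := by rw [← hg']
        _ = g * φ m₂ * (φ m₂)⁻¹ := by rw [← hm]
        _ = φ b₀ * (φ a₀)⁻¹ := by rw [hg']; group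
    obtain ⟨e, he1, _⟩ := fracR GS φ hφ hab₀ hfr
    exact ⟨e, he1⟩
  have incl4 : ∀ m : M, ∃ e, m * b₀ = b₀ * e := by
    intro m
    obtain ⟨m₂, hm₂⟩ := (hg (φ m * g)).2 ⟨m, rfl⟩
    have hfr : φ (m * b₀) * (φ (m₂ * a₀))⁻¹ = φ b₀ * (φ a₀)⁻¹ := by
      rw [map_mul, map_mul]
      calc φ m * φ b₀ * (φ m₂ * φ a₀)⁻¹
          = φ m * (φ b₀ * (φ a₀)⁻¹) * (φ m₂)⁻¹ := by group
        _ = φ m * g * (φ m₂)⁻¹ := by rw [← hg']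
        _ = g * φ m₂ * (φ m₂)⁻¹ := by rw [hm₂]
        _ = φ b₀ * (φ a₀)⁻¹ := by rw [hg']; group
    obtain ⟨e, _, he2⟩ := fracR GS φ hφ hab₀ hfr
    exact ⟨e, he2⟩
  -- a = a₀
  have haa₀ : a = a₀ := by
    obtain ⟨b₂, hb₂⟩ := (hginv (φ a)).2 ⟨b, by rw [hgab]; group⟩
    -- hb₂ : φ a = g⁻¹ * φ b₂
    have hfr1 : φ b₂ * (φ a)⁻¹ = φ b₀ * (φ a₀)⁻¹ := by
      calc φ b₂ * (φ a)⁻¹ = g * (g⁻¹ * φ b₂) * (φ a)⁻¹ := by group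
        _ = g * φ a * (φ a)⁻¹ := by rw [← hb₂]
        _ = φ b₀ * (φ a₀)⁻¹ := by rw [hg']; group
    obtain ⟨u, hu, _⟩ := fracR GS φ hφ hab₀ hfr1
    -- hu : a = a₀ * u
    obtain ⟨m', hm'⟩ := (hginv (φ a₀)).1 ⟨b₀, by rw [hg']; group⟩
    -- hm' : φ a₀ = φ m' * g⁻¹
    have hfr2 : (φ a₀)⁻¹ * φ m' = (φ a)⁻¹ * φ b := by
      calc (φ a₀)⁻¹ * φ m' = (φ a₀)⁻¹ * (φ m' * g⁻¹) * g := by group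
        _ = (φ a₀)⁻¹ * φ a₀ * g := by rw [← hm']
        _ = (φ a)⁻¹ * φ b := by rw [hgab]; group
    obtain ⟨v, hv, _⟩ := fracL GS φ hφ hab hfr2
    -- hv : a₀ = v * a
    have hxa : a = v * a * u := hu.trans (by rw [hv])
    obtain ⟨_, hu1⟩ := conj_self GS hxa
    rw [hu, hu1, mul_one]
  -- b = b₀
  have hbb₀ : b = b₀ := by
    obtain ⟨a₂, ha₂⟩ := (hg (φ b)).2 ⟨a, by rw [hgab]; group⟩
    -- ha₂ : φ b = g * φ a₂
    have hfr1 : φ b * (φ a₂)⁻¹ = φ b₀ * (φ a₀)⁻¹ := by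
      calc φ b * (φ a₂)⁻¹ = g * φ a₂ * (φ a₂)⁻¹ := by rw [← ha₂]
        _ = φ b₀ * (φ a₀)⁻¹ := by rw [hg']; group
    obtain ⟨u₁, _, hu₁⟩ := fracR GS φ hφ hab₀ hfr1
    -- hu₁ : b = b₀ * u₁
    obtain ⟨m₃, hm₃⟩ := (hg (φ b₀)).1 ⟨a₀, by rw [hg']; group⟩
    -- hm₃ : φ b₀ = φ m₃ * g
    have hfr2 : (φ m₃)⁻¹ * φ b₀ = (φ a)⁻¹ * φ b := by
      calc (φ m₃)⁻¹ * φ b₀ = (φ m₃)⁻¹ * (φ m₃ * g) := by rw [← hm₃]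
        _ = (φ a)⁻¹ * φ b := by rw [hgab]; group
    obtain ⟨v₁, _, hv₁⟩ := fracL GS φ hφ hab hfr2
    -- hv₁ : b₀ = v₁ * b
    have hxb : b = v₁ * b * u₁ := hu₁.trans (by rw [hv₁])
    obtain ⟨_, hu1⟩ := conj_self GS hxb
    rw [hu₁, hu1, mul_one]
  constructor
  · intro x
    constructor
    · rintro ⟨m, rfl⟩
      exact incl1 m
    · rintro ⟨m, rfl⟩
      obtain ⟨e, he⟩ := incl3 m
      refine ⟨e, ?_⟩
      rw [haa₀]
      exact he
  · intro x
    constructor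
    · rintro ⟨m, rfl⟩
      exact incl2 m
    · rintro ⟨m, rfl⟩
      obtain ⟨e, he⟩ := incl4 m
      refine ⟨e, ?_⟩
      rw [hbb₀]
      exact he

end Stmt10Aux

/-- for an element `g = (φ a)⁻¹ * φ b` of the quasi-centralizer
of the group of fractions `G` of a Garside monoid `M`, written in left greedy
normal form (`a, b` prime to each other for left-divisibility), both `a` and
`b` are quasi-central in `M`; consequently `QZ(G)` is the group of fractions
of `QZ(M)`. -/
theorem stmt_10 (M : Type*) [Monoid M] (GS : GarsideStruct M)
    (G : Type*) [Group G] (φ : M →* G) (hφ : Function.Injective φ)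
    (hfrac : ∀ g : G, ∃ a b : M, g = (φ a)⁻¹ * φ b)
    (g : G) (hg : ∀ x : G, (∃ m : M, x = g * φ m) ↔ (∃ m : M, x = φ m * g))
    (a b : M) (hab : GS.gcdL a b = 1) (hgab : g = (φ a)⁻¹ * φ b) :
    QuasiCentral a ∧ QuasiCentral b ∧
    ∀ h : G, (∀ x : G, (∃ m : M, x = h * φ m) ↔ (∃ m : M, x = φ m * h)) →
      ∃ c d : M, QuasiCentral c ∧ QuasiCentral d ∧ h = (φ c)⁻¹ * φ d := by
  obtain ⟨hqa, hqb⟩ := Stmt10Aux.main GS φ hφ g hg a b hab hgab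
  refine ⟨hqa, hqb, ?_⟩
  intro h hh
  obtain ⟨c', d', hcd'⟩ := hfrac h
  obtain ⟨c, hc⟩ := GS.gcdL_left c' d'
  obtain ⟨d, hd⟩ := GS.gcdL_right c' d'
  have hcd : GS.gcdL c d = 1 := Stmt10Aux.compl_gcdL GS hc hd
  have hh' : h = (φ c)⁻¹ * φ d := by
    have h1 : φ c' = φ (GS.gcdL c' d') * φ c := by rw [← map_mul, ← hc]
    have h2 : φ d' = φ (GS.gcdL c' d') * φ d := by rw [← map_mul, ← hd]
    rw [hcd', h1, h2]
    group
  obtain ⟨hqc, hqd⟩ := Stmt10Aux.main GS φ hφ h hh c d hcd hh'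
  exact ⟨c, d, hqc, hqd, hh'⟩
end

section
/- Consider the free group F_2 on two letters with the presentation ⟨ a_i, i ∈ ℤ | a_i a_{i+1} = a_j a_{j+1} for all i, j ∈ ℤ ⟩ (where a_0 = a, a_1 = b). Then the group defined by this presentation is isomorphic to the free group on two generators, under the map sending a_0 ↦ a, a_1 ↦ b, and more generally a_{i+2} = Δ^{-1} a_i Δ where Δ = a_0 a_1. -/
/-- `Δ = a b` in the free group on two letters (with `a = of false`,
`b = of true`). -/
def δF2 : FreeGroup Bool := FreeGroup.of false * FreeGroup.of true

/-- The family `a_i`, `i ∈ ℤ`, in the free group: `a_{2k} = Δ^{-k} a Δ^k` and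
`a_{2k+1} = Δ^{-k} b Δ^k`, so that `a_0 = a`, `a_1 = b` and
`a_{i+2} = Δ⁻¹ a_i Δ`. -/
noncomputable def aF2 (i : ℤ) : FreeGroup Bool :=
  δF2 ^ (-(i.ediv 2)) * (if i.emod 2 = 0 then FreeGroup.of false else FreeGroup.of true) *
    δF2 ^ (i.ediv 2)

/-- The relations `a_i a_{i+1} = a_j a_{j+1}` on the free group over ℤ. -/
def f2Rels : Set (FreeGroup ℤ) :=
  {r | ∃ i j : ℤ, r = FreeGroup.of i * FreeGroup.of (i + 1) *
    (FreeGroup.of j * FreeGroup.of (j + 1))⁻¹}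

private lemma conj_mul_even {G : Type*} [Group G] (x y d : G) (k : ℤ) (h : x * y = d) :
    (d ^ (-k) * x * d ^ k) * (d ^ (-k) * y * d ^ k) = d := by
  have e : (d ^ (-k) * x * d ^ k) * (d ^ (-k) * y * d ^ k)
      = d ^ (-k) * (x * y) * d ^ k := by group
  rw [e, h]; group

private lemma conj_mul_odd {G : Type*} [Group G] (x y d : G) (k : ℤ) (h : x * y = d) :
    (d ^ (-k) * y * d ^ k) * (d ^ (-(k+1)) * x * d ^ (k+1)) = d := by
  have e : (d ^ (-k) * y * d ^ k) * (d ^ (-(k+1)) * x * d ^ (k+1))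
      = d ^ (-k) * (y * d⁻¹ * x) * d ^ (k+1) := by group
  have e2 : y * d⁻¹ * x = 1 := by rw [← h]; group
  rw [e, e2]; group

lemma aF2_mul (i : ℤ) : aF2 i * aF2 (i + 1) = δF2 := by
  rcases Int.even_or_odd i with ⟨k, hk⟩ | ⟨k, hk⟩
  · have h1 : i.ediv 2 = k := show i / 2 = k by omega
    have h2 : i.emod 2 = 0 := show i % 2 = 0 by omega
    have h3 : (i+1).ediv 2 = k := show (i+1) / 2 = k by omega
    have h4 : (i+1).emod 2 = 1 := show (i+1) % 2 = 1 by omega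
    simp only [aF2, h1, h2, h3, h4, if_pos rfl, one_ne_zero, if_false, if_true, reduceIte]
    exact conj_mul_even _ _ _ _ rfl
  · have h1 : i.ediv 2 = k := show i / 2 = k by omega
    have h2 : i.emod 2 = 1 := show i % 2 = 1 by omega
    have h3 : (i+1).ediv 2 = k + 1 := show (i+1) / 2 = k + 1 by omega
    have h4 : (i+1).emod 2 = 0 := show (i+1) % 2 = 0 by omega
    simp only [aF2, h1, h2, h3, h4, if_pos rfl, one_ne_zero, if_false, if_true, reduceIte]
    exact conj_mul_odd _ _ _ _ rfl

lemma f2Rels_lift (r : FreeGroup ℤ) (hr : r ∈ f2Rels) : FreeGroup.lift aF2 r = 1 := by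
  obtain ⟨i, j, rfl⟩ := hr
  simp only [map_mul, map_inv, FreeGroup.lift_apply_of]
  rw [aF2_mul, aF2_mul, mul_inv_cancel]

/-- `Δ` in the presented group. -/
noncomputable def δP : PresentedGroup f2Rels :=
  PresentedGroup.of 0 * PresentedGroup.of 1

lemma rel_holds (i j : ℤ) :
    (PresentedGroup.of i * PresentedGroup.of (i+1) : PresentedGroup f2Rels)
      = PresentedGroup.of j * PresentedGroup.of (j+1) := by
  have h : (FreeGroup.of i * FreeGroup.of (i + 1) *
      (FreeGroup.of j * FreeGroup.of (j + 1))⁻¹ : FreeGroup ℤ) ∈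
      Subgroup.normalClosure f2Rels :=
    Subgroup.subset_normalClosure ⟨i, j, rfl⟩
  have h2 : (PresentedGroup.mk f2Rels) (FreeGroup.of i * FreeGroup.of (i + 1) *
      (FreeGroup.of j * FreeGroup.of (j + 1))⁻¹) = 1 :=
    (QuotientGroup.eq_one_iff _).2 h
  rw [map_mul, map_inv, map_mul, map_mul, mul_inv_eq_one] at h2
  exact h2

lemma rel_delta (i : ℤ) :
    (PresentedGroup.of i * PresentedGroup.of (i+1) : PresentedGroup f2Rels) = δP := by
  have := rel_holds i 0
  rw [δP]; simpa using this

lemma of_two_mul (i : ℤ) :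
    (PresentedGroup.of (i + 2) : PresentedGroup f2Rels) = δP⁻¹ * PresentedGroup.of i * δP := by
  have hA := rel_delta i
  have hB := rel_delta (i+1)
  rw [show i + 2 = (i + 1) + 1 by ring]
  have e1 : (PresentedGroup.of (i+1+1) : PresentedGroup f2Rels)
      = (PresentedGroup.of (i+1))⁻¹ * δP := by rw [← hB]; group
  have e2 : (PresentedGroup.of (i+1) : PresentedGroup f2Rels)
      = (PresentedGroup.of i)⁻¹ * δP := by rw [← hA]; group
  rw [e1, e2]; group

lemma of_conj (k i : ℤ) :
    (PresentedGroup.of (i + 2 * k) : PresentedGroup f2Rels)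
      = δP ^ (-k) * PresentedGroup.of i * δP ^ k := by
  induction k using Int.induction_on with
  | zero => simp
  | succ n ih =>
      have h := of_two_mul (i + 2 * n)
      rw [show i + 2 * ((n : ℤ) + 1) = (i + 2 * n) + 2 by ring, h, ih]
      group
  | pred n ih =>
      have h := of_two_mul (i + 2 * (-(n : ℤ) - 1))
      rw [show (i + 2 * (-(n:ℤ) - 1)) + 2 = i + 2 * (-(n:ℤ)) by ring] at h
      have e : (PresentedGroup.of (i + 2 * (-(n:ℤ) - 1)) : PresentedGroup f2Rels)
          = δP * PresentedGroup.of (i + 2 * (-(n:ℤ))) * δP⁻¹ := by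
        rw [h]; group
      rw [e, ih]
      group

/-- The forward homomorphism. -/
noncomputable def φF2 : PresentedGroup f2Rels →* FreeGroup Bool :=
  PresentedGroup.toGroup f2Rels_lift

/-- The inverse homomorphism. -/
noncomputable def ψF2 : FreeGroup Bool →* PresentedGroup f2Rels :=
  FreeGroup.lift (fun b => if b then PresentedGroup.of 1 else PresentedGroup.of 0)

lemma ψF2_δ : ψF2 δF2 = δP := by
  simp [ψF2, δF2, δP]

lemma ψF2_aF2 (i : ℤ) : ψF2 (aF2 i) = PresentedGroup.of i := by
  unfold aF2
  rw [map_mul, map_mul, map_zpow, map_zpow, ψF2_δ]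
  by_cases h : i.emod 2 = 0
  · have h' : i % 2 = 0 := h
    rw [if_pos h]
    have : ψF2 (FreeGroup.of false) = PresentedGroup.of 0 := by simp [ψF2]
    rw [this, ← of_conj (i.ediv 2) 0,
      show (0 : ℤ) + 2 * (i.ediv 2) = i from by show (0:ℤ) + 2 * (i / 2) = i; omega]
  · have h' : i % 2 = 1 := by have : i % 2 = i.emod 2 := rfl; omega
    rw [if_neg h]
    have : ψF2 (FreeGroup.of true) = PresentedGroup.of 1 := by simp [ψF2]
    rw [this, ← of_conj (i.ediv 2) 1,
      show (1 : ℤ) + 2 * (i.ediv 2) = i from by show (1:ℤ) + 2 * (i / 2) = i; omega]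

/-- the group presented by generators `a_i` (`i ∈ ℤ`) and
relations `a_i a_{i+1} = a_j a_{j+1}` is isomorphic to the free group on two
letters, the isomorphism sending `a_0 ↦ a`, `a_1 ↦ b`, and in general
`a_i ↦ Δ^{-⌊i/2⌋} a_{i mod 2} Δ^{⌊i/2⌋}` (so `a_{i+2} = Δ⁻¹ a_i Δ` with
`Δ = a_0 a_1 = a b`). -/
theorem stmt_15 :
    ∃ e : PresentedGroup f2Rels ≃* FreeGroup Bool,
      ∀ i : ℤ, e (PresentedGroup.of i) = aF2 i := by
  have h1 : ψF2.comp φF2 = MonoidHom.id _ := by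
    apply PresentedGroup.ext
    intro i
    simp only [MonoidHom.comp_apply, MonoidHom.id_apply, φF2, PresentedGroup.toGroup.of]
    exact ψF2_aF2 i
  have h2 : φF2.comp ψF2 = MonoidHom.id _ := by
    apply FreeGroup.ext_hom
    intro b
    simp only [MonoidHom.comp_apply, MonoidHom.id_apply, ψF2, FreeGroup.lift_apply_of]
    cases b
    · simp only [if_false, Bool.false_eq_true, reduceIte, φF2, PresentedGroup.toGroup.of]
      show aF2 0 = FreeGroup.of false
      norm_num [aF2, show (0:ℤ).ediv 2 = 0 from rfl, show (0:ℤ).emod 2 = 0 from rfl]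
    · simp only [if_true, φF2, PresentedGroup.toGroup.of]
      show aF2 1 = FreeGroup.of true
      norm_num [aF2, show (1:ℤ).ediv 2 = 0 from rfl, show (1:ℤ).emod 2 = 1 from rfl]
  refine ⟨MonoidHom.toMulEquiv φF2 ψF2 h1 h2, fun i => ?_⟩
  show φF2 (PresentedGroup.of i) = aF2 i
  exact PresentedGroup.toGroup.of f2Rels_lift
end
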